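/- Let q be a prime power, L a field extension of Fq of degree m, and let H ∈ L^{k×n} and B ∈ L^{μ×n}. Let X be a random variable with values in L^n, and set S = HX and W = BX. If S is uniformly distributed on the image {Hx : x ∈ L^n}, then I(S;W) ≥ (rank H + rank B − rank [H; B]) · m · log q, where [H; B] is the stacked (k+μ)×n matrix and ranks are over L. -/

import Mathlib

set_option autoImplicit false

open Matrix MeasureTheory

/-- Shannon entropy (in nats) of a finitely-valued random variable. -/
noncomputable def entropy {Ω α : Type*} [Fintype α] [MeasurableSpace Ω]
    (P : Measure Ω) (X : Ω → α) : ℝ :=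
  - ∑ a : α, (P {ω | X ω = a}).toReal * Real.log (P {ω | X ω = a}).toReal

/-- Mutual information (in nats) `I(X;Y) = H(X) + H(Y) - H(X,Y)`. -/
noncomputable def mutualInfo {Ω α β : Type*} [Fintype α] [Fintype β] [MeasurableSpace Ω]
    (P : Measure Ω) (X : Ω → α) (Y : Ω → β) : ℝ :=
  entropy P X + entropy P Y - entropy P (fun ω => (X ω, Y ω))

set_option maxHeartbeats 1000000

/-- Max-entropy: entropy of a distribution on `t` is at most `log t.card`. -/
lemma aux_maxent {α : Type*} (t : Finset α) (p : α → ℝ)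
    (h0 : ∀ a ∈ t, 0 ≤ p a) (h1 : ∑ a ∈ t, p a = 1) :
    ∑ a ∈ t, Real.negMulLog (p a) ≤ Real.log t.card := by
  have hne : t.Nonempty := by
    rcases Finset.eq_empty_or_nonempty t with h | h
    · simp [h] at h1
    · exact h
  have hN : (0:ℝ) < t.card := by exact_mod_cast Finset.card_pos.mpr hne
  have jensen := Real.concaveOn_negMulLog.le_map_sum (t := t)
      (w := fun _ => (t.card : ℝ)⁻¹) (p := p)
      (fun i _ => by positivity)
      (by simp [Finset.sum_const, Finset.card_univ]; field_simp)
      (fun i hi => h0 i hi)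
  have hrhs : (∑ i ∈ t, (t.card : ℝ)⁻¹ • p i) = (t.card : ℝ)⁻¹ := by
    rw [← Finset.smul_sum, h1, smul_eq_mul, mul_one]
  rw [hrhs] at jensen
  have hval : Real.negMulLog ((t.card : ℝ)⁻¹) = (t.card : ℝ)⁻¹ * Real.log t.card := by
    simp [Real.negMulLog, Real.log_inv]
  rw [hval] at jensen
  have := mul_le_mul_of_nonneg_left jensen (le_of_lt hN)
  calc ∑ a ∈ t, Real.negMulLog (p a)
      = (t.card : ℝ) * ∑ i ∈ t, (t.card : ℝ)⁻¹ • Real.negMulLog (p i) := by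
        rw [← Finset.smul_sum, smul_eq_mul, ← mul_assoc, mul_inv_cancel₀ (ne_of_gt hN), one_mul]
    _ ≤ (t.card : ℝ) * ((t.card : ℝ)⁻¹ * Real.log t.card) := this
    _ = Real.log t.card := by field_simp

/-- Conditional-entropy-style bound: if a nonnegative vector sums to `pb` and is supported
on a set of at most `M` elements, then `∑ negMulLog (p a) - negMulLog pb ≤ pb * log M`. -/
lemma aux_cond {α : Type*} [Fintype α] (p : α → ℝ) (pb M : ℝ)
    (h0 : ∀ a, 0 ≤ p a) (hsum : ∑ a, p a = pb)
    (t : Finset α) (ht : ∀ a, p a ≠ 0 → a ∈ t)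
    (htM : (t.card : ℝ) ≤ M) (hM0 : 0 ≤ M) :
    ∑ a, Real.negMulLog (p a) - Real.negMulLog pb ≤ pb * Real.log M := by
  have hzero : ∀ a ∈ Finset.univ, a ∉ t → Real.negMulLog (p a) = 0 := by
    intro a _ ha
    have : p a = 0 := by by_contra h; exact ha (ht a h)
    simp [this]
  have hzero' : ∀ a ∈ Finset.univ, a ∉ t → p a = 0 := by
    intro a _ ha; by_contra h; exact ha (ht a h)
  have hsum_t : ∑ a ∈ t, p a = pb := by
    rw [Finset.sum_subset (Finset.subset_univ t) hzero', hsum]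
  have hsum_nml : ∑ a, Real.negMulLog (p a) = ∑ a ∈ t, Real.negMulLog (p a) :=
    (Finset.sum_subset (Finset.subset_univ t) hzero).symm
  rcases eq_or_lt_of_le (Finset.sum_nonneg (fun a _ => h0 a)) with h | hpb
  · -- pb = 0, hence all p a = 0
    have hpb0 : pb = 0 := by rw [← hsum, ← h]
    have hall : ∀ a, p a = 0 := by
      intro a
      have h2 : ∑ a, p a = 0 := hsum.trans hpb0
      exact (Finset.sum_eq_zero_iff_of_nonneg (fun a _ => h0 a)).mp h2 a (Finset.mem_univ a)
    simp [hall, hpb0]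
  · rw [hsum] at hpb
    -- pb > 0
    have htne : t.Nonempty := by
      rcases Finset.eq_empty_or_nonempty t with h | h
      · rw [h] at hsum_t; simp at hsum_t; rw [← hsum_t] at hpb; exact absurd hpb (lt_irrefl 0)
      · exact h
    have hcard1 : (1:ℝ) ≤ t.card := by exact_mod_cast Finset.card_pos.mpr htne
    set u : α → ℝ := fun a => p a / pb with hu
    have hu0 : ∀ a ∈ t, 0 ≤ u a := fun a _ => div_nonneg (h0 a) (le_of_lt hpb)
    have hu1 : ∑ a ∈ t, u a = 1 := by
      rw [hu]; rw [← Finset.sum_div, hsum_t, div_self (ne_of_gt hpb)]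
    have hmax := aux_maxent t u hu0 hu1
    have hlog : Real.log t.card ≤ Real.log M :=
      Real.log_le_log (by linarith) htM
    have key : ∑ a ∈ t, Real.negMulLog (p a)
        = Real.negMulLog pb + pb * ∑ a ∈ t, Real.negMulLog (u a) := by
      have hpa : ∀ a ∈ t, p a = pb * u a := by
        intro a _; rw [hu]; field_simp
      rw [Finset.sum_congr rfl (fun a ha => by rw [hpa a ha, Real.negMulLog_mul])]
      rw [Finset.sum_add_distrib, ← Finset.sum_mul, hu1, one_mul, ← Finset.mul_sum]
    rw [hsum_nml, key]
    have : pb * ∑ a ∈ t, Real.negMulLog (u a) ≤ pb * Real.log M :=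
      mul_le_mul_of_nonneg_left (hmax.trans hlog) (le_of_lt hpb)
    linarith

/-- Rank identity: `rank [H; B] = rank B + dim (H(ker B))`. -/
lemma aux_rank {n k μ : ℕ} {L : Type} [Field L]
    (H : Matrix (Fin k) (Fin n) L) (B : Matrix (Fin μ) (Fin n) L) :
    (Matrix.fromRows H B).rank =
      B.rank + Module.finrank L
        (Submodule.map H.mulVecLin (LinearMap.ker B.mulVecLin)) := by
  classical
  set f := (Matrix.fromRows H B).mulVecLin
  set g := H.mulVecLin ∘ₗ (LinearMap.ker B.mulVecLin).subtype with hg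
  have hkerf : LinearMap.ker f = LinearMap.ker H.mulVecLin ⊓ LinearMap.ker B.mulVecLin := by
    ext x
    simp only [LinearMap.mem_ker, Submodule.mem_inf, Matrix.mulVecLin_apply, f,
      Matrix.fromRows_mulVec, funext_iff, Sum.forall, Sum.elim_inl, Sum.elim_inr,
      Pi.zero_apply]
  have hrangeg : LinearMap.range g = Submodule.map H.mulVecLin (LinearMap.ker B.mulVecLin) := by
    rw [hg, LinearMap.range_comp, Submodule.range_subtype]
  have hkerg : LinearMap.ker g =
      Submodule.comap (LinearMap.ker B.mulVecLin).subtype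
        (LinearMap.ker H.mulVecLin ⊓ LinearMap.ker B.mulVecLin) := by
    rw [hg, LinearMap.ker_comp]
    ext x
    simp only [Submodule.mem_comap, Submodule.coe_subtype, LinearMap.mem_ker,
      Submodule.mem_inf]
    exact ⟨fun h => ⟨h, x.2⟩, fun h => h.1⟩
  have hkerg_rank : Module.finrank L (LinearMap.ker g)
      = Module.finrank L (LinearMap.ker H.mulVecLin ⊓ LinearMap.ker B.mulVecLin : Submodule L (Fin n → L)) := by
    rw [hkerg]
    exact LinearEquiv.finrank_eq (Submodule.comapSubtypeEquivOfLe inf_le_right)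
  have rn1 := LinearMap.finrank_range_add_finrank_ker f
  have rn2 := LinearMap.finrank_range_add_finrank_ker B.mulVecLin
  have rn3 := LinearMap.finrank_range_add_finrank_ker g
  rw [hkerf] at rn1
  rw [hrangeg, hkerg_rank] at rn3
  have hrk1 : (Matrix.fromRows H B).rank = Module.finrank L (LinearMap.range f) := rfl
  have hrk2 : B.rank = Module.finrank L (LinearMap.range B.mulVecLin) := rfl
  omega

lemma aux_entropy_eq {Ω α : Type*} [Fintype α] [MeasurableSpace Ω] (P : Measure Ω) (Y : Ω → α) :
    entropy P Y = ∑ a, Real.negMulLog ((P {ω | Y ω = a}).toReal) := by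
  unfold entropy
  rw [← Finset.sum_neg_distrib]
  exact Finset.sum_congr rfl (fun a _ => by rw [Real.negMulLog]; ring)

lemma aux_sum_fibers {Ω α : Type*} [Fintype α] [MeasurableSpace Ω] (P : Measure Ω)
    (hmeas : ∀ s : Set Ω, MeasurableSet s) (Y : Ω → α) (s : Set Ω) :
    ∑ a : α, P ({ω | Y ω = a} ∩ s) = P s := by
  have h := sum_measure_preimage_singleton (μ := P.restrict s) (Finset.univ : Finset α)
      (f := Y) (fun y _ => hmeas _)
  rw [Finset.coe_univ, Set.preimage_univ, Measure.restrict_apply_univ] at h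
  rw [← h]
  exact Finset.sum_congr rfl (fun a _ => (Measure.restrict_apply (hmeas _)).symm)

lemma aux_entropy_uniform {Ω α : Type*} [Fintype α] [MeasurableSpace Ω]
    (P : Measure Ω) [IsProbabilityMeasure P] (hmeas : ∀ s : Set Ω, MeasurableSet s)
    (Y : Ω → α) (T : Finset α)
    (hmem : ∀ ω, Y ω ∈ T)
    (hconst : ∀ a₁ ∈ T, ∀ a₂ ∈ T, P {ω | Y ω = a₁} = P {ω | Y ω = a₂}) :
    entropy P Y = Real.log T.card := by
  classical
  set r : α → ℝ := fun a => (P {ω | Y ω = a}).toReal with hr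
  have hzero : ∀ a ∉ T, r a = 0 := by
    intro a ha
    have : {ω | Y ω = a} = (∅ : Set Ω) := by
      ext ω; simp only [Set.mem_setOf_eq, Set.mem_empty_iff_false, iff_false]
      intro h; exact ha (h ▸ hmem ω)
    simp [hr, this]
  have hsum : ∑ a, r a = 1 := by
    have h := aux_sum_fibers P hmeas Y Set.univ
    simp only [Set.inter_univ] at h
    rw [hr]
    rw [← ENNReal.toReal_sum (fun a _ => measure_ne_top P _)]
    rw [h, measure_univ, ENNReal.toReal_one]
  have hsumT : ∑ a ∈ T, r a = 1 := by
    rw [Finset.sum_subset (Finset.subset_univ T) (fun a _ ha => hzero a ha), hsum]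
  have hTne : T.Nonempty := by
    rcases Finset.eq_empty_or_nonempty T with h | h
    · rw [h] at hsumT; simp at hsumT
    · exact h
  obtain ⟨a₀, ha₀⟩ := hTne
  have hconst' : ∀ a ∈ T, r a = r a₀ := by
    intro a ha; rw [hr]; simp only; rw [hconst a ha a₀ ha₀]
  have hcardpos : (0:ℝ) < T.card := by exact_mod_cast Finset.card_pos.mpr ⟨a₀, ha₀⟩
  have hval : r a₀ = (T.card : ℝ)⁻¹ := by
    have : ∑ a ∈ T, r a = T.card * r a₀ := by
      rw [Finset.sum_congr rfl hconst', Finset.sum_const, nsmul_eq_mul]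
    rw [this] at hsumT
    field_simp at hsumT ⊢
    linarith
  rw [aux_entropy_eq]
  have : ∀ a ∈ Finset.univ, a ∉ T → Real.negMulLog (r a) = 0 := by
    intro a _ ha; rw [hzero a ha]; simp
  rw [← Finset.sum_subset (Finset.subset_univ T) this]
  rw [Finset.sum_congr rfl (fun a ha => by rw [hconst' a ha, hval])]
  rw [Finset.sum_const, nsmul_eq_mul]
  rw [Real.negMulLog, Real.log_inv]
  field_simp

lemma aux_entropy_cond {Ω α β : Type*} [Fintype α] [Fintype β] [MeasurableSpace Ω]
    (P : Measure Ω) [IsProbabilityMeasure P] (hmeas : ∀ s : Set Ω, MeasurableSet s)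
    (Y : Ω → α) (Z : Ω → β) (M : ℝ) (hM0 : 0 ≤ M)
    (hM : ∀ b : β, ∃ t : Finset α,
      (∀ a, P {ω | (Y ω, Z ω) = (a, b)} ≠ 0 → a ∈ t) ∧ (t.card : ℝ) ≤ M) :
    entropy P (fun ω => (Y ω, Z ω)) - entropy P Z ≤ Real.log M := by
  classical
  set r : α × β → ℝ := fun c => (P {ω | (Y ω, Z ω) = c}).toReal with hr
  set rb : β → ℝ := fun b => (P {ω | Z ω = b}).toReal with hrb
  have hmarg : ∀ b, ∑ a, r (a, b) = rb b := by
    intro b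
    have h := aux_sum_fibers P hmeas Y {ω | Z ω = b}
    have hsets : ∀ a : α, {ω | Y ω = a} ∩ {ω | Z ω = b} = {ω | (Y ω, Z ω) = (a, b)} := by
      intro a; ext ω
      simp only [Set.mem_inter_iff, Set.mem_setOf_eq, Prod.mk.injEq]
    rw [hr, hrb]
    simp only
    rw [← ENNReal.toReal_sum (fun a _ => measure_ne_top P _), ← h]
    congr 1
    exact Finset.sum_congr rfl (fun a _ => by rw [hsets a])
  have hsumb : ∑ b, rb b = 1 := by
    have h := aux_sum_fibers P hmeas Z Set.univ
    simp only [Set.inter_univ] at h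
    rw [hrb]
    simp only
    rw [← ENNReal.toReal_sum (fun b _ => measure_ne_top P _), h, measure_univ,
      ENNReal.toReal_one]
  have e0 : entropy P (fun ω => (Y ω, Z ω)) = ∑ c : α × β, Real.negMulLog (r c) :=
    aux_entropy_eq P _
  have e1 : entropy P Z = ∑ b, Real.negMulLog (rb b) := aux_entropy_eq P _
  rw [e0, e1, Fintype.sum_prod_type_right]
  rw [← Finset.sum_sub_distrib]
  calc ∑ b, (∑ a, Real.negMulLog (r (a, b)) - Real.negMulLog (rb b))
      ≤ ∑ b, rb b * Real.log M := by
        refine Finset.sum_le_sum (fun b _ => ?_)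
        obtain ⟨t, ht, htM⟩ := hM b
        refine aux_cond (fun a => r (a, b)) (rb b) M (fun a => ENNReal.toReal_nonneg)
          (hmarg b) t (fun a h => ht a (fun h0 => h (by rw [hr]; simp only; rw [h0]; simp)))
          htM hM0
    _ = Real.log M := by rw [← Finset.sum_mul, hsumb, one_mul]

/-- If `S = HX` is uniformly distributed on the image `{Hx : x ∈ L^n}`, then with `W = BX`,
`I(S;W) ≥ (rank H + rank B - rank [H; B]) · m · log q`. -/
theorem mutualInfo_ge_of_uniform_syndrome
    (q m : ℕ) (hq : IsPrimePow q)
    (F L : Type) [Field F] [Fintype F] (hF : Fintype.card F = q)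
    [Field L] [Fintype L] [Algebra F L] (hm : Module.finrank F L = m)
    (n k μ : ℕ)
    (H : Matrix (Fin k) (Fin n) L) (B : Matrix (Fin μ) (Fin n) L)
    (Ω : Type) [Fintype Ω] [MeasurableSpace Ω] [MeasurableSingletonClass Ω]
    (P : Measure Ω) [IsProbabilityMeasure P]
    (X : Ω → Fin n → L)
    (hSunif : ∀ x₁ x₂ : Fin n → L,
      P {ω | H *ᵥ X ω = H *ᵥ x₁} = P {ω | H *ᵥ X ω = H *ᵥ x₂}) :
    ((H.rank : ℝ) + (B.rank : ℝ) - ((Matrix.fromRows H B).rank : ℝ)) *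
        (m * Real.log q) ≤
      mutualInfo P (fun ω => H *ᵥ X ω) (fun ω => B *ᵥ X ω) := by
    classical
  have hmeas : ∀ s : Set Ω, MeasurableSet s := fun s => s.to_countable.measurableSet
  set R : Submodule L (Fin k → L) := LinearMap.range H.mulVecLin with hRdef
  set K : Submodule L (Fin k → L) :=
    Submodule.map H.mulVecLin (LinearMap.ker B.mulVecLin) with hKdef
  set dK : ℕ := Module.finrank L K with hdK
  -- cardinalities
  have hcardL : Fintype.card L = q ^ m := by
    have := Module.card_eq_pow_finrank (K := F) (V := L); rw [hF, hm] at this; exact this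
  have hcardR : Fintype.card R = q ^ (m * H.rank) := by
    have h1 : Fintype.card R = Fintype.card L ^ Module.finrank L R :=
      Module.card_eq_pow_finrank (K := L) (V := R)
    have h2 : Module.finrank L R = H.rank := rfl
    rw [h1, h2, hcardL, ← pow_mul]
  have hcardK : Fintype.card K = q ^ (m * dK) := by
    have h1 : Fintype.card K = Fintype.card L ^ Module.finrank L K :=
      Module.card_eq_pow_finrank (K := L) (V := K)
    rw [h1, ← hdK, hcardL, ← pow_mul]
  have hrank : (Matrix.fromRows H B).rank = B.rank + dK := aux_rank H B
  -- entropy of S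
  have hES : entropy P (fun ω => H *ᵥ X ω) = Real.log (Fintype.card R) := by
    have h := aux_entropy_uniform P hmeas (fun ω => H *ᵥ X ω)
      (Set.toFinset (R : Set (Fin k → L)))
      (fun ω => by
        rw [Set.mem_toFinset]
        exact ⟨X ω, rfl⟩)
      (fun a₁ h1 a₂ h2 => by
        rw [Set.mem_toFinset] at h1 h2
        obtain ⟨x₁, hx₁⟩ := h1
        obtain ⟨x₂, hx₂⟩ := h2
        rw [← hx₁, ← hx₂]
        exact hSunif x₁ x₂)
    have hc : Fintype.card (↑R : Set (Fin k → L)) = Fintype.card R :=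
      Fintype.card_congr (Equiv.subtypeEquivRight (fun x => Iff.rfl))
    rw [h, Set.toFinset_card, hc]
  -- conditional entropy bound
  have hEC : entropy P (fun ω => (H *ᵥ X ω, B *ᵥ X ω)) - entropy P (fun ω => B *ᵥ X ω)
      ≤ Real.log (Fintype.card K) := by
    refine aux_entropy_cond P hmeas _ _ _ (by positivity) (fun b => ?_)
    by_cases hb : ∃ x : Fin n → L, B *ᵥ x = b
    · obtain ⟨x₀, hx₀⟩ := hb
      refine ⟨Finset.image (fun y : K => H *ᵥ x₀ + (y : Fin k → L)) Finset.univ,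
        fun a hne => ?_, ?_⟩
      · have hne' : {ω | (H *ᵥ X ω, B *ᵥ X ω) = (a, b)}.Nonempty := by
          rw [Set.nonempty_iff_ne_empty]
          intro h
          exact hne (by rw [h]; exact measure_empty)
        obtain ⟨ω, hω⟩ := hne'
        have hω' : H *ᵥ X ω = a ∧ B *ᵥ X ω = b := Prod.ext_iff.mp hω
        have hωa : H *ᵥ X ω = a := hω'.1
        have hωb : B *ᵥ X ω = b := hω'.2
        rw [Finset.mem_image]
        refine ⟨⟨H *ᵥ (X ω - x₀), ?_⟩, Finset.mem_univ _, ?_⟩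
        · refine Submodule.mem_map.mpr ⟨X ω - x₀, ?_, rfl⟩
          rw [LinearMap.mem_ker, Matrix.mulVecLin_apply, Matrix.mulVec_sub, hωb, hx₀, sub_self]
        · show H *ᵥ x₀ + H *ᵥ (X ω - x₀) = a
          rw [Matrix.mulVec_sub, ← hωa]; abel
      · calc ((Finset.image (fun y : K => H *ᵥ x₀ + (y : Fin k → L)) Finset.univ).card : ℝ)
            ≤ ((Finset.univ : Finset K).card : ℝ) := by
              exact_mod_cast Finset.card_image_le
          _ = (Fintype.card K : ℝ) := by rw [Finset.card_univ]
    · refine ⟨∅, fun a hne => absurd ?_ hne,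
        by simpa using (by positivity : (0:ℝ) ≤ (Fintype.card K : ℝ))⟩
      have : {ω | (H *ᵥ X ω, B *ᵥ X ω) = (a, b)} = ∅ := by
        ext ω
        simp only [Set.mem_setOf_eq, Set.mem_empty_iff_false, iff_false, Prod.mk.injEq, not_and]
        intro _ hWb
        exact absurd ⟨X ω, hWb⟩ hb
      rw [this]; exact measure_empty
  -- assemble
  rw [mutualInfo]
  have hlogN : Real.log (Fintype.card R) = (m * H.rank : ℝ) * Real.log q := by
    rw [hcardR]; push_cast [Real.log_pow]; ring
  have hlogM : Real.log (Fintype.card K) = (m * dK : ℝ) * Real.log q := by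
    rw [hcardK]; push_cast [Real.log_pow]; ring
  rw [hlogN] at hES
  rw [hlogM] at hEC
  have hcast : ((Matrix.fromRows H B).rank : ℝ) = (B.rank : ℝ) + (dK : ℝ) := by
    exact_mod_cast congrArg (Nat.cast : ℕ → ℝ) hrank
  rw [hcast]
  have hstep : ((H.rank : ℝ) + (B.rank : ℝ) - ((B.rank : ℝ) + (dK : ℝ))) * (m * Real.log q)
      = (m * H.rank : ℝ) * Real.log q - (m * dK : ℝ) * Real.log q := by ring
  rw [hstep]
  linarith
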